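/- Let S : ℝ → M₂(ℝ) be a continuous family of symmetric positive-definite 2×2 real matrices, and let α = (α₁, α₂) : ℝ → ℝ² be a differentiable solution of the linear ODE α̇(t) = J·S(t)·α(t), where J is the matrix with rows (0, −1) and (1, 0), such that α(t) ≠ 0 for every t. Then α₁(t)·α̇₂(t) − α₂(t)·α̇₁(t) = α(t)ᵀ S(t) α(t) > 0 for every t ∈ ℝ; consequently any continuous argument θ(t) of α₁(t) + i α₂(t) is strictly increasing. -/

import Mathlib

open Matrix

open Complex Filter

lemma continuous_arg_hasDerivAt
    (z : ℝ → ℂ) (θ : ℝ → ℝ) (hz : ∀ t, z t ≠ 0)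
    (hzc : Continuous z)
    (hθc : Continuous θ)
    (hθ : ∀ t, z t = (‖z t‖ : ℝ) * Complex.exp ((θ t : ℝ) * Complex.I))
    (t₀ : ℝ) (w : ℂ) (hw : HasDerivAt z w t₀) :
    HasDerivAt θ ((w / z t₀).im) t₀ := by
  set g : ℝ → ℂ := fun s => z s / z t₀ with hg
  have hgne : ∀ s, g s ≠ 0 := fun s => div_ne_zero (hz s) (hz t₀)
  have hgc : Continuous g := hzc.div_const _
  have habs : ∀ s, ((‖z s‖ : ℝ) : ℂ) ≠ 0 := by
    intro s; simpa using hz s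
  have hexpθ : ∀ s, Complex.exp ((θ s : ℝ) * Complex.I) = z s / (‖z s‖ : ℝ) := by
    intro s
    rw [eq_div_iff (habs s)]
    linear_combination -(hθ s)
  set φ : ℝ → ℝ := fun s => θ t₀ + (Complex.log (g s)).im with hφ
  -- exp of the imaginary part of the log
  have hexpim : ∀ wc : ℂ, wc ≠ 0 →
      Complex.exp (((Complex.log wc).im : ℝ) * Complex.I) = wc / (‖wc‖ : ℝ) := by
    intro wc hwc
    have h1 : ((Complex.log wc).im : ℂ) * Complex.I
        = Complex.log wc - ((Complex.log wc).re : ℝ) := by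
      nth_rewrite 2 [← Complex.re_add_im (Complex.log wc)]; ring
    rw [h1, Complex.exp_sub, Complex.exp_log hwc, Complex.log_re,
      ← Complex.ofReal_exp, Real.exp_log (norm_pos_iff.mpr hwc)]
  -- exp (φ s * I) = exp (θ s * I)
  have hexpφ : ∀ s, Complex.exp ((φ s : ℝ) * Complex.I) = Complex.exp ((θ s : ℝ) * Complex.I) := by
    intro s
    have : ((φ s : ℝ) : ℂ) * Complex.I
        = (θ t₀ : ℝ) * Complex.I + ((Complex.log (g s)).im : ℝ) * Complex.I := by
      push_cast [hφ]; ring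
    rw [this, Complex.exp_add, hexpim _ (hgne s), hexpθ, hexpθ]
    have hab : ‖g s‖ = ‖z s‖ / ‖z t₀‖ := by
      simp [hg, norm_div]
    rw [hab, hg]
    field_simp [habs s, habs t₀, hz s, hz t₀]
    rw [Complex.ofReal_div, mul_div_assoc', mul_div_cancel_left₀ _ (habs t₀)]
  -- θ - φ is a multiple of 2π everywhere
  have hmult : ∀ s, ∃ n : ℤ, θ s - φ s = n * (2 * Real.pi) := by
    intro s
    have : Complex.exp (((θ s : ℝ) - (φ s : ℝ)) * Complex.I) = 1 := by
      rw [sub_mul, Complex.exp_sub, hexpφ s, div_self (Complex.exp_ne_zero _)]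
    rw [Complex.exp_eq_one_iff] at this
    obtain ⟨n, hn⟩ := this
    refine ⟨n, ?_⟩
    have := mul_right_cancel₀ Complex.I_ne_zero (by rw [hn]; ring_nf : ((θ s : ℝ) - (φ s : ℝ)) * Complex.I = ((n : ℂ) * (2 * Real.pi)) * Complex.I)
    exact_mod_cast this
  -- g t₀ = 1
  have hgt₀ : g t₀ = 1 := div_self (hz t₀)
  have hφt₀ : φ t₀ = θ t₀ := by simp [hφ, hgt₀]
  -- φ is continuous at t₀
  have hφc : ContinuousAt φ t₀ := by
    apply continuousAt_const.add
    exact Complex.continuous_im.continuousAt.comp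
      (((continuousAt_clog (hgt₀ ▸ Complex.one_mem_slitPlane)).comp hgc.continuousAt))
  -- θ = φ near t₀
  have hev : θ =ᶠ[nhds t₀] φ := by
    have hψ : ContinuousAt (fun s => θ s - φ s) t₀ := (hθc.continuousAt).sub hφc
    have h0 : (fun s => θ s - φ s) t₀ = 0 := by simp [hφt₀]
    have hsmall : ∀ᶠ s in nhds t₀, |θ s - φ s| < 2 * Real.pi := by
      have := hψ.eventually (eventually_abs_sub_lt ((fun s => θ s - φ s) t₀)
        (by positivity : (0:ℝ) < 2 * Real.pi))
      simpa [h0] using this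
    filter_upwards [hsmall] with s hs
    obtain ⟨n, hn⟩ := hmult s
    have hn0 : n = 0 := by
      by_contra h
      have h1 : (1 : ℝ) ≤ |(n : ℝ)| := by
        exact_mod_cast Int.one_le_abs (by exact_mod_cast h)
      have : 2 * Real.pi ≤ |θ s - φ s| := by
        rw [hn, abs_mul, abs_of_pos (by positivity : (0:ℝ) < 2 * Real.pi)]
        nlinarith [Real.pi_pos]
      linarith
    have : θ s - φ s = 0 := by rw [hn, hn0]; simp
    linarith
  -- φ has the right derivative at t₀
  have hlog : HasDerivAt (fun s => Complex.log (g s)) (w / z t₀) t₀ := by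
    have houter : HasFDerivAt Complex.log
        ((ContinuousLinearMap.smulRight (1 : ℂ →L[ℂ] ℂ) (1 : ℂ)).restrictScalars ℝ) (g t₀) := by
      have := ((Complex.hasStrictDerivAt_log
        (hgt₀ ▸ Complex.one_mem_slitPlane)).hasDerivAt).hasFDerivAt
      rw [hgt₀] at this ⊢
      rw [inv_one] at this
      exact this.restrictScalars ℝ
    have hinner : HasDerivAt g (w / z t₀) t₀ := by
      simpa [hg, div_eq_mul_inv] using hw.div_const (z t₀)
    have := houter.comp_hasDerivAt t₀ hinner
    exact this.congr_deriv (by simp)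
  have hφd : HasDerivAt φ ((w / z t₀).im) t₀ := by
    have him : HasDerivAt (fun s => (Complex.log (g s)).im) ((w / z t₀).im) t₀ := by
      have := Complex.imCLM.hasFDerivAt.comp_hasDerivAt t₀ hlog
      exact this
    simpa [hφ] using him.const_add (θ t₀)
  exact hφd.congr_of_eventuallyEq hev

/-- For a continuous family `S t` of symmetric positive-definite 2×2 real
matrices and a nonvanishing differentiable solution `α` of `α̇ = J S(t) α`, one has
`α₁ α̇₂ − α₂ α̇₁ = αᵀ S α > 0`; consequently any continuous argument `θ` of
`α₁ + i α₂` is strictly increasing. -/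
theorem transverse_linearized_flow_rotates
    (S : ℝ → Matrix (Fin 2) (Fin 2) ℝ)
    (hScont : Continuous S)
    (hSsymm : ∀ t, (S t).IsSymm)
    (hSpos : ∀ t, (S t).PosDef)
    (α : ℝ → Fin 2 → ℝ)
    (hODE : ∀ t, HasDerivAt α ((Matrix.of ![![0, -1], ![1, 0]] * S t).mulVec (α t)) t)
    (hne : ∀ t, α t ≠ 0) :
    (∀ t : ℝ,
      α t 0 * deriv (fun s => α s 1) t - α t 1 * deriv (fun s => α s 0) t
        = α t ⬝ᵥ (S t).mulVec (α t)
      ∧ 0 < α t ⬝ᵥ (S t).mulVec (α t)) ∧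
    (∀ θ : ℝ → ℝ, Continuous θ →
      (∀ t : ℝ, (α t 0 : ℂ) + (α t 1 : ℝ) * Complex.I
          = (‖(α t 0 : ℂ) + (α t 1 : ℝ) * Complex.I‖ : ℝ)
              * Complex.exp ((θ t : ℝ) * Complex.I)) →
      StrictMono θ) := by
  -- notation
  set w : ℝ → Fin 2 → ℝ := fun t => (S t).mulVec (α t) with hwdef
  set v : ℝ → Fin 2 → ℝ := fun t => (Matrix.of ![![0, -1], ![1, 0]] * S t).mulVec (α t) with hvdef
  have hv0 : ∀ t, v t 0 = -(w t 1) := by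
    intro t
    simp [hvdef, hwdef, Matrix.mulVec, Matrix.vecMul, Matrix.mul_apply, dotProduct,
      Fin.sum_univ_two]
  have hv1 : ∀ t, v t 1 = w t 0 := by
    intro t
    simp [hvdef, hwdef, Matrix.mulVec, Matrix.vecMul, Matrix.mul_apply, dotProduct,
      Fin.sum_univ_two]
  have hd : ∀ t, ∀ i, HasDerivAt (fun s => α s i) (v t i) t :=
    fun t => hasDerivAt_pi.mp (hODE t)
  have hdot : ∀ t, α t ⬝ᵥ w t = α t 0 * w t 0 + α t 1 * w t 1 := by
    intro t; simp [dotProduct, Fin.sum_univ_two]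
  have hpos : ∀ t, 0 < α t ⬝ᵥ (S t).mulVec (α t) := by
    intro t
    have := (hSpos t).dotProduct_mulVec_pos (hne t)
    simpa using this
  constructor
  · intro t
    refine ⟨?_, hpos t⟩
    rw [(hd t 0).deriv, (hd t 1).deriv, hv0, hv1]
    show α t 0 * w t 0 - α t 1 * -w t 1 = α t ⬝ᵥ w t
    rw [hdot]; ring
  · intro θ hθc hθ
    set z : ℝ → ℂ := fun t => (α t 0 : ℂ) + (α t 1 : ℝ) * Complex.I with hzdef
    have hzre : ∀ t, (z t).re = α t 0 := by intro t; simp [hzdef]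
    have hzim : ∀ t, (z t).im = α t 1 := by intro t; simp [hzdef]
    have hz : ∀ t, z t ≠ 0 := by
      intro t h
      apply hne t
      have h0 : α t 0 = 0 := by rw [← hzre t, h]; simp
      have h1 : α t 1 = 0 := by rw [← hzim t, h]; simp
      funext i
      fin_cases i <;> simpa
    have hzc : Continuous z := by
      have hαc : Continuous α := by
        rw [continuous_iff_continuousAt]; exact fun t => (hODE t).continuousAt
      have h0 : Continuous fun t => α t 0 := (continuous_apply 0).comp hαc
      have h1 : Continuous fun t => α t 1 := (continuous_apply 1).comp hαc
      exact (Complex.continuous_ofReal.comp h0).add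
        ((Complex.continuous_ofReal.comp h1).mul continuous_const)
    have hw : ∀ t, HasDerivAt z ((v t 0 : ℂ) + (v t 1 : ℝ) * Complex.I) t := by
      intro t
      exact ((hd t 0).ofReal_comp).add (((hd t 1).ofReal_comp).mul_const Complex.I)
    have hder : ∀ t, HasDerivAt θ ((((v t 0 : ℂ) + (v t 1 : ℝ) * Complex.I) / z t).im) t :=
      fun t => continuous_arg_hasDerivAt z θ hz hzc hθc hθ t _ (hw t)
    have hpos' : ∀ t, 0 < (((v t 0 : ℂ) + (v t 1 : ℝ) * Complex.I) / z t).im := by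
      intro t
      have hnsq : 0 < Complex.normSq (z t) := Complex.normSq_pos.mpr (hz t)
      have him : (((v t 0 : ℂ) + (v t 1 : ℝ) * Complex.I) / z t).im
          = (α t ⬝ᵥ w t) / Complex.normSq (z t) := by
        rw [Complex.div_im, hzre, hzim, hdot, hv0, hv1]
        simp
        ring
      rw [him]
      exact div_pos (hpos t) hnsq
    apply strictMono_of_deriv_pos
    intro x
    rw [(hder x).deriv]
    exact hpos' x
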